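/- For every dimension d ≥ 1 there exists a constant C_d ≥ 1, depending only on d, with the following property. Let (Ω, 𝒜, ℙ) be a probability space and X : Ω → (subsets of ℝ^d) a random set such that for every closed axis-aligned cube Q ⊆ ℝ^d of side length ℓ > 0 the set {ω : X(ω) ∩ Q = ∅} is measurable with ℙ(X ∩ Q = ∅) ≤ exp(−ℓ^d). Then for every h > 0 and all x, y ∈ ℝ^d with |x − y| ≥ h there exists a measurable event E ⊆ Ω with ℙ(E) ≤ (C_d|x − y|/h + 1)·exp(−(h/C_d)^d) such that for every ω ∉ E one has d_{h,X(ω)}(x,y) ≤ C_d|x − y|. -/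

import Mathlib

open scoped ENNReal

noncomputable section

/-- A point in Euclidean space `ℝ^d`. -/
abbrev Pt (d : ℕ) := EuclideanSpace ℝ (Fin d)

/-- `p = (p₀, …, p_m)` is an admissible path in `P` from `x` to `y` with step size `h`:
all its points lie in `P`, the first point is within `h/2` of `x`, the last within `h/2`
of `y`, and consecutive points are at distance at most `h`. (A path with `m + 1` points
corresponds to a path with `m` elements in the paper, which is always nonempty.) -/
def IsPath {d : ℕ} (P : Set (Pt d)) (h : ℝ) (x y : Pt d) {m : ℕ}
    (p : Fin (m + 1) → Pt d) : Prop :=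
  (∀ i, p i ∈ P) ∧ dist x (p 0) ≤ h / 2 ∧ dist y (p (Fin.last m)) ≤ h / 2 ∧
    ∀ i : Fin m, dist (p i.castSucc) (p i.succ) ≤ h

/-- The length `L(p)` of a path: the sum of the lengths of its hops. -/
def pathLength {d m : ℕ} (p : Fin (m + 1) → Pt d) : ℝ :=
  ∑ i : Fin m, dist (p i.castSucc) (p i.succ)

/-- The distance `d_{h,P}(x,y) ∈ [0,∞]`: the infimum of the lengths of admissible
paths in `P` from `x` to `y` with step size `h` (equal to `+∞` if there is none). -/
def graphDist {d : ℕ} (P : Set (Pt d)) (h : ℝ) (x y : Pt d) : ℝ≥0∞ :=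
  ⨅ (m : ℕ) (p : Fin (m + 1) → Pt d) (_ : IsPath P h x y p),
    ENNReal.ofReal (pathLength p)

open MeasureTheory

lemma cube_dist_aux {d : ℕ} (c p : Pt d) (r : ℝ) (hr : 0 ≤ r)
    (hp : ∀ i, |p i - c i| ≤ r) : dist p c ≤ Real.sqrt d * r := by
  rw [EuclideanSpace.dist_eq]
  have key : ∑ i, dist (p i) (c i) ^ 2 ≤ (d : ℝ) * r ^ 2 := by
    calc ∑ i, dist (p i) (c i) ^ 2 ≤ ∑ _i : Fin d, r ^ 2 := by
          refine Finset.sum_le_sum fun i _ => ?_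
          have := hp i
          rw [Real.dist_eq]
          nlinarith [abs_nonneg (p i - c i)]
      _ = (d : ℝ) * r ^ 2 := by simp [Finset.sum_const]
  calc Real.sqrt (∑ i, dist (p i) (c i) ^ 2) ≤ Real.sqrt ((d:ℝ) * r ^ 2) :=
        Real.sqrt_le_sqrt key
    _ = Real.sqrt d * r := by
        rw [Real.sqrt_mul (by positivity), Real.sqrt_sq hr]

set_option maxHeartbeats 1600000 in
/-- **High-probability upper bound.** For every dimension `d ≥ 1` there is a constant
`C_d ≥ 1`, depending only on `d`, such that: for every probability space and every
random set `X` in `ℝ^d` such that for every closed axis-aligned cube `Q` of side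
length `ℓ > 0` the event `{X ∩ Q = ∅}` is measurable with probability at most
`exp(-ℓ^d)`, and for every `h > 0` and all `x, y` with `|x - y| ≥ h`, there is a
measurable event `E` of probability at most `(C_d |x-y| / h + 1) exp(-(h/C_d)^d)`
outside of which `d_{h,X}(x,y) ≤ C_d |x - y|`. -/
theorem graphDist_upper_bound_whp :
    ∀ d : ℕ, 1 ≤ d → ∃ C : ℝ, 1 ≤ C ∧
      ∀ (Ω : Type) [MeasurableSpace Ω] (μ : Measure Ω), IsProbabilityMeasure μ →
      ∀ X : Ω → Set (Pt d),
        (∀ (a : Pt d) (ℓ : ℝ), 0 < ℓ →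
          MeasurableSet {ω | X ω ∩ {z : Pt d | ∀ i, z i ∈ Set.Icc (a i) (a i + ℓ)} = ∅} ∧
          μ {ω | X ω ∩ {z : Pt d | ∀ i, z i ∈ Set.Icc (a i) (a i + ℓ)} = ∅} ≤
            ENNReal.ofReal (Real.exp (-ℓ ^ d))) →
        ∀ (h : ℝ) (x y : Pt d), 0 < h → h ≤ dist x y →
          ∃ E : Set Ω, MeasurableSet E ∧
            μ E ≤ ENNReal.ofReal ((C * dist x y / h + 1) * Real.exp (-(h / C) ^ d)) ∧
            ∀ ω ∉ E, graphDist (X ω) h x y ≤ ENNReal.ofReal (C * dist x y) := by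
  intro d hd
  have hd1 : (1:ℝ) ≤ (d:ℝ) := by exact_mod_cast hd
  set C : ℝ := 2 * d + 3 with hCdef
  have hsd1 : 1 ≤ Real.sqrt d := by
    rw [show (1:ℝ) = Real.sqrt 1 by simp]
    exact Real.sqrt_le_sqrt hd1
  have hsd0 : 0 < Real.sqrt d := lt_of_lt_of_le one_pos hsd1
  have hsdd : Real.sqrt d ≤ (d:ℝ) := by
    nlinarith [Real.sq_sqrt (le_trans zero_le_one hd1), Real.sqrt_nonneg (d:ℝ)]
  have hC1 : (1:ℝ) ≤ C := by nlinarith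
  have hC3 : (3:ℝ) ≤ C := by nlinarith
  have hC0 : (0:ℝ) < C := by linarith
  have hCsd : 2 * Real.sqrt d ≤ C := by nlinarith
  refine ⟨C, hC1, ?_⟩
  intro Ω _ μ hμ X hX h x y hh hhxy
  set D : ℝ := dist x y with hDdef
  have hD0 : 0 < D := lt_of_lt_of_le hh hhxy
  have hDh1 : 1 ≤ D / h := (one_le_div hh).mpr hhxy
  set ℓ : ℝ := h / (2 * Real.sqrt d) with hℓdef
  have hℓ0 : 0 < ℓ := by positivity
  set m : ℕ := ⌈2 * D / h⌉₊ with hmdef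
  have hmle : 2 * D / h ≤ (m:ℝ) := Nat.le_ceil _
  have hmlt : (m:ℝ) < 2 * D / h + 1 := Nat.ceil_lt_add_one (by positivity)
  have hm0 : 0 < (m:ℝ) := lt_of_lt_of_le (by positivity) hmle
  have hm3 : (m:ℝ) ≤ 3 * (D / h) := by
    have : 2 * D / h = 2 * (D / h) := by ring
    nlinarith
  -- centers of cubes
  set z : ℕ → Pt d := fun k => x + (((k:ℝ))/m) • (y - x) with hzdef
  have hz0 : z 0 = x := by simp [hzdef]
  have hzm : z m = y := by
    simp only [hzdef, div_self (ne_of_gt hm0), one_smul]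
    abel
  have hzstep : ∀ k : ℕ, dist (z k) (z (k+1)) ≤ h / 2 := by
    intro k
    have heq : z (k+1) - z k = ((1:ℝ)/m) • (y - x) := by
      simp only [hzdef]
      push_cast
      rw [show ((k:ℝ)+1)/m = (k:ℝ)/m + 1/m by ring]
      module
    have : dist (z k) (z (k+1)) = (1/m) * D := by
      rw [dist_comm, dist_eq_norm, heq, norm_smul]
      simp [abs_of_pos, hm0, hDdef, dist_comm x y, dist_eq_norm]
    rw [this]
    rw [div_le_iff₀ hh] at hmle
    rw [div_mul_eq_mul_div, div_le_iff₀ hm0]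
    nlinarith
  -- cubes
  set Q : ℕ → Set (Pt d) := fun k =>
    {q : Pt d | ∀ i, q i ∈ Set.Icc ((z k i - ℓ/2)) ((z k i - ℓ/2) + ℓ)} with hQdef
  have hQdist : ∀ (k : ℕ) (q : Pt d), q ∈ Q k → dist q (z k) ≤ h / 4 := by
    intro k q hq
    have : dist q (z k) ≤ Real.sqrt d * (ℓ/2) := by
      refine cube_dist_aux _ _ _ (by positivity) fun i => ?_
      have := hq i
      rw [Set.mem_Icc] at this
      rw [abs_le]
      constructor <;> [linarith [this.1]; linarith [this.2]]
    calc dist q (z k) ≤ Real.sqrt d * (ℓ/2) := this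
      _ = h / 4 := by
        rw [hℓdef]
        field_simp
        ring
  set A : ℕ → Set Ω := fun k => {ω | X ω ∩ Q k = ∅} with hAdef
  have hXk : ∀ k : ℕ, MeasurableSet (A k) ∧ μ (A k) ≤ ENNReal.ofReal (Real.exp (-ℓ ^ d)) := by
    intro k
    have := hX (WithLp.toLp 2 (fun i => z k i - ℓ/2)) ℓ hℓ0
    exact this
  refine ⟨⋃ k ∈ Finset.range (m+1), A k, ?_, ?_, ?_⟩
  · exact Finset.measurableSet_biUnion _ fun k _ => (hXk k).1
  · calc μ (⋃ k ∈ Finset.range (m+1), A k) ≤ ∑ k ∈ Finset.range (m+1), μ (A k) :=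
          measure_biUnion_finset_le _ _
      _ ≤ ∑ _k ∈ Finset.range (m+1), ENNReal.ofReal (Real.exp (-ℓ ^ d)) :=
          Finset.sum_le_sum fun k _ => (hXk k).2
      _ = ((m+1 : ℕ) : ℝ≥0∞) * ENNReal.ofReal (Real.exp (-ℓ ^ d)) := by
          simp [Finset.sum_const, nsmul_eq_mul]
      _ = ENNReal.ofReal (((m:ℝ)+1) * Real.exp (-ℓ ^ d)) := by
          rw [ENNReal.ofReal_mul (by positivity), ← ENNReal.ofReal_natCast]
          push_cast
          ring_nf
      _ ≤ ENNReal.ofReal ((C * D / h + 1) * Real.exp (-(h / C) ^ d)) := by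
          refine ENNReal.ofReal_le_ofReal ?_
          have hexp : Real.exp (-ℓ ^ d) ≤ Real.exp (-(h / C) ^ d) := by
            refine Real.exp_le_exp.mpr (neg_le_neg ?_)
            refine pow_le_pow_left₀ (by positivity) ?_ d
            rw [hℓdef]
            exact div_le_div_of_nonneg_left (le_of_lt hh) (by positivity) hCsd
          have hm' : (m:ℝ) + 1 ≤ C * D / h + 1 := by
            have : 3 * (D / h) ≤ C * (D / h) := by
              refine mul_le_mul_of_nonneg_right hC3 (by positivity)
            have h2 : C * (D/h) = C * D / h := by ring
            linarith
          exact mul_le_mul hm' hexp (by positivity) (by positivity)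
  · intro ω hω
    have hne : ∀ k : ℕ, k < m + 1 → (X ω ∩ Q k).Nonempty := by
      intro k hk
      rw [Set.nonempty_iff_ne_empty]
      intro hemp
      exact hω (Set.mem_biUnion (Finset.mem_range.mpr hk) hemp)
    set p : Fin (m+1) → Pt d := fun k => (hne k.val k.isLt).choose with hpdef
    have hpmem : ∀ k : Fin (m+1), p k ∈ X ω ∩ Q k.val := fun k => (hne k.val k.isLt).choose_spec
    have hpz : ∀ k : Fin (m+1), dist (p k) (z k.val) ≤ h / 4 :=
      fun k => hQdist _ _ (hpmem k).2
    have hpath : IsPath (X ω) h x y p := by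
      refine ⟨fun k => (hpmem k).1, ?_, ?_, ?_⟩
      · have := hpz 0
        rw [dist_comm]
        simp only [Fin.val_zero, hz0] at this
        linarith
      · have := hpz (Fin.last m)
        rw [dist_comm]
        simp only [Fin.val_last, hzm] at this
        linarith
      · intro i
        calc dist (p i.castSucc) (p i.succ)
            ≤ dist (p i.castSucc) (z i.castSucc.val) + dist (z i.castSucc.val) (z i.succ.val)
              + dist (z i.succ.val) (p i.succ) := dist_triangle4 _ _ _ _
          _ ≤ h/4 + h/2 + h/4 := by
              have h1 := hpz i.castSucc
              have h3 := hpz i.succ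
              have h2 : dist (z i.castSucc.val) (z i.succ.val) ≤ h / 2 := by
                have : (i.succ.val) = i.castSucc.val + 1 := by simp
                rw [this]
                exact hzstep _
              rw [dist_comm (z i.succ.val)]
              linarith
          _ = h := by ring
    have hlen : pathLength p ≤ C * D := by
      have : pathLength p ≤ (m:ℝ) * h := by
        calc pathLength p ≤ ∑ _i : Fin m, h :=
              Finset.sum_le_sum fun i _ => hpath.2.2.2 i
          _ = (m:ℝ) * h := by simp [Finset.sum_const]
      calc pathLength p ≤ (m:ℝ) * h := this
        _ ≤ 3 * (D/h) * h := by nlinarith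
        _ = 3 * D := by field_simp
        _ ≤ C * D := by nlinarith
    calc graphDist (X ω) h x y ≤ ENNReal.ofReal (pathLength p) :=
          iInf_le_of_le m (iInf_le_of_le p (iInf_le_of_le hpath le_rfl))
      _ ≤ ENNReal.ofReal (C * D) := ENNReal.ofReal_le_ofReal hlen
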